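/- Let K be a field and let 0 → A → V → B → 0 be a short exact sequence of finite-dimensional K-vector spaces, with injective linear map f : A → V, surjective linear map g : V → B, and range f = ker g. Let a = (a_i)_{i ∈ ι} be a basis of A, b = (b_j)_{j ∈ κ} a basis of B (ι, κ finite index types), let c be a basis of V indexed by ι ⊕ κ, and let s, s' : B → V be two linear sections of g (g ∘ s = id_B and g ∘ s' = id_B). Then the determinant with respect to c of the family (f(a_i), s(b_j))_{ι ⊕ κ} equals the determinant with respect to c of the family (f(a_i), s'(b_j))_{ι ⊕ κ}. -/

import Mathlib

/-- In a short exact sequence `0 → A → V → B → 0` of finite-dimensional based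
vector spaces, the determinant (with respect to a basis `c` of `V`) of the
family `(f (a i))ᵢ ∪ (s (b j))ⱼ` is independent of the choice of the linear
section `s` of `g`. -/
theorem sesDetSectionIndependent {K : Type*} [Field K] {A V B : Type*}
    [AddCommGroup A] [Module K A] [AddCommGroup V] [Module K V]
    [AddCommGroup B] [Module K B]
    [FiniteDimensional K A] [FiniteDimensional K V] [FiniteDimensional K B]
    {ι κ : Type*} [Fintype ι] [Fintype κ] [DecidableEq ι] [DecidableEq κ]
    (f : A →ₗ[K] V) (g : V →ₗ[K] B)
    (hf : Function.Injective f) (hg : Function.Surjective g)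
    (hfg : LinearMap.range f = LinearMap.ker g)
    (a : Module.Basis ι K A) (b : Module.Basis κ K B) (c : Module.Basis (ι ⊕ κ) K V)
    (s s' : B →ₗ[K] V) (hs : g ∘ₗ s = LinearMap.id)
    (hs' : g ∘ₗ s' = LinearMap.id) :
    c.det (Sum.elim (fun i => f (a i)) (fun j => s (b j))) =
      c.det (Sum.elim (fun i => f (a i)) (fun j => s' (b j))) := by
  -- For each j, s' (b j) - s (b j) ∈ ker g = range f
  have hmem : ∀ j : κ, ∃ t : A, f t = s' (b j) - s (b j) := by
    intro j
    have h1 : g (s (b j)) = b j := by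
      have := congrArg (fun h => h (b j)) (congrArg DFunLike.coe hs)
      simpa using this
    have h2 : g (s' (b j)) = b j := by
      have := congrArg (fun h => h (b j)) (congrArg DFunLike.coe hs')
      simpa using this
    have hk : s' (b j) - s (b j) ∈ LinearMap.ker g := by
      simp [LinearMap.mem_ker, map_sub, h1, h2]
    rw [← hfg] at hk
    exact hk
  choose t ht using hmem
  -- key identity
  have key : ∀ j : κ, s' (b j) = s (b j) + ∑ i : ι, a.repr (t j) i • f (a i) := by
    intro j
    have : f (t j) = ∑ i : ι, a.repr (t j) i • f (a i) := by
      conv_lhs => rw [← a.sum_repr (t j)]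
      simp only [map_sum, map_smul]
    rw [← this, ht j]
    abel
  set v := Sum.elim (fun i => f (a i)) (fun j => s (b j)) with hv
  set v' := Sum.elim (fun i => f (a i)) (fun j => s' (b j)) with hv'
  set D : Matrix ι κ K := fun i j => a.repr (t j) i with hD
  have hmat : c.toMatrix v' = c.toMatrix v * Matrix.fromBlocks 1 D 0 1 := by
    ext k l
    rcases l with i | j
    · simp [hv, hv', Matrix.mul_apply, Module.Basis.toMatrix_apply, Matrix.fromBlocks,
        Matrix.one_apply, Fintype.sum_sum_type]
    · simp only [hv, hv', Matrix.mul_apply, Module.Basis.toMatrix_apply, Matrix.fromBlocks,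
        Fintype.sum_sum_type, Sum.elim_inl, Sum.elim_inr, Matrix.of_apply,
        Matrix.one_apply]
      rw [key j]
      simp [Finset.mul_sum, map_sum, map_smul, Finsupp.sum_apply, mul_comm]
      rw [add_comm]
  rw [Module.Basis.det_apply, Module.Basis.det_apply, hmat, Matrix.det_mul,
    Matrix.det_fromBlocks_zero₂₁]
  simp
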